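/- For all n ≥ 1, |P_n − C_α·α^n| < α^(−n/2), where C_α = (α+1)/(−α^2 + 3α + 1) and α is the real root of x^3 − x − 1. -/

import Mathlib

def padovan : ℕ → ℕ
  | 0 => 1
  | 1 => 1
  | 2 => 1
  | n + 3 => padovan (n + 1) + padovan n

noncomputable def padErr (α C : ℝ) (n : ℕ) : ℝ := (padovan n : ℝ) - C * α ^ n

lemma padErr_rec3 (α C : ℝ) (hα : α ^ 3 = α + 1) (n : ℕ) :
    padErr α C (n + 3) = padErr α C (n + 1) + padErr α C n := by
  simp only [padErr, padovan]
  push_cast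
  linear_combination (-C * α ^ n) * hα

lemma padErr_base (α C : ℝ) (hα : α ^ 3 = α + 1) (hαne : α ≠ 0)
    (hDne : -α ^ 2 + 3 * α + 1 ≠ 0)
    (hC : C = (α + 1) / (-α ^ 2 + 3 * α + 1)) :
    (1 - C * α ^ 2 : ℝ) = -α * (1 - C * α) - (1 - C) / α := by
  have hD' : α * (-α + 3) + 1 ≠ 0 := by contrapose! hDne; linear_combination hDne
  rw [hC]
  field_simp
  linear_combination (-3*α) * hα

lemma pad_key_ineq (α C : ℝ) (hα : α ^ 3 = α + 1) (h1 : (1.32:ℝ) < α) (h2 : α < 1.33)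
    (hα0 : (0:ℝ) < α)
    (hD : (0:ℝ) < -α ^ 2 + 3 * α + 1)
    (hC : C = (α + 1) / (-α ^ 2 + 3 * α + 1)) :
    (1 - C * α) ^ 2 + α * (1 - C) * (1 - C * α) + (1 - C) ^ 2 / α < 1/α - α^2/4 := by
  have hCl : 0.72 < C := by rw [hC, lt_div_iff₀ hD]; nlinarith
  have hCu : C < 0.725 := by rw [hC, div_lt_iff₀ hD]; nlinarith
  have e0l : (0.275:ℝ) < 1 - C := by linarith
  have e0u : (1 - C:ℝ) < 0.28 := by linarith
  have e1l : (0.03:ℝ) < 1 - C * α := by nlinarith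
  have e1u : (1 - C * α:ℝ) < 0.05 := by nlinarith
  have key2 : ((1 - C*α)^2 + α*(1-C)*(1-C*α)) * α + (1-C)^2 < 1 - α^3/4 := by
    have e0p : (0:ℝ) < 1 - C := by linarith
    have e1p : (0:ℝ) < 1 - C * α := by linarith
    nlinarith [mul_pos (mul_pos hα0 e0p) e1p, mul_pos e1p e1p]
  calc (1 - C * α) ^ 2 + α * (1 - C) * (1 - C * α) + (1 - C) ^ 2 / α
      = (((1 - C*α)^2 + α*(1-C)*(1-C*α)) * α + (1-C)^2) / α := by field_simp
    _ < (1 - α^3/4) / α := by apply div_lt_div_of_pos_right key2 hα0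
    _ = 1/α - α^2/4 := by field_simp

theorem padovan_binet_error (α : ℝ) (hα : α ^ 3 = α + 1)
    (C : ℝ) (hC : C = (α + 1) / (-α ^ 2 + 3 * α + 1)) :
    ∀ n : ℕ, 1 ≤ n → |(padovan n : ℝ) - C * α ^ n| < α ^ (-(n : ℝ) / 2) := by
  have h1 : (1.32 : ℝ) < α := by
    by_contra h; push_neg at h; nlinarith [sq_nonneg (α + 0.66)]
  have h2 : α < 1.33 := by
    by_contra h; push_neg at h; nlinarith [sq_nonneg (α + 0.665)]
  have hα0 : (0:ℝ) < α := by linarith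
  have hαne : α ≠ 0 := ne_of_gt hα0
  have hD : (0:ℝ) < -α ^ 2 + 3 * α + 1 := by nlinarith
  have hDne : -α ^ 2 + 3 * α + 1 ≠ 0 := ne_of_gt hD
  set E : ℕ → ℝ := padErr α C with hE
  have e0 : E 0 = 1 - C := by simp [hE, padErr, padovan]
  have e1 : E 1 = 1 - C * α := by simp [hE, padErr, padovan]
  have e2 : E 2 = 1 - C * α ^ 2 := by
    simp only [hE, padErr]
    norm_num [padovan]
  have hrec2 : ∀ n, E (n + 2) = -α * E (n + 1) - E n / α := by
    intro n
    induction n with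
    | zero =>
      rw [e0, e1, e2]
      exact padErr_base α C hα hαne hDne hC
    | succ m ih =>
      have h3 := padErr_rec3 α C hα m
      rw [← hE] at h3
      rw [show m + 1 + 2 = m + 3 from rfl, h3, ih]
      field_simp
      ring_nf
      linear_combination (-(E (1 + m))) * hα
  set Q : ℕ → ℝ := fun n => E (n+1) ^ 2 + α * E n * E (n+1) + E n ^ 2 / α with hQ
  have hQrec : ∀ n, Q (n + 1) = Q n / α := by
    intro n
    simp only [hQ]
    rw [hrec2 n]
    field_simp
    ring
  have hQn : ∀ n, Q n = Q 0 / α ^ n := by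
    intro n
    induction n with
    | zero => simp
    | succ m ih => rw [hQrec, ih, div_div, pow_succ]
  have hmu : (0:ℝ) < 1/α - α^2/4 := by
    rw [div_sub_div _ _ hαne (by norm_num : (4:ℝ) ≠ 0)]
    apply div_pos
    · nlinarith
    · nlinarith
  have hEQ : ∀ n, E n ^ 2 * (1/α - α^2/4) ≤ Q n := by
    intro n
    have hid : Q n - E n ^ 2 * (1/α - α^2/4) = (E (n+1) + (α/2) * E n)^2 := by
      simp only [hQ]; field_simp; ring
    nlinarith [sq_nonneg (E (n+1) + (α/2) * E n)]
  have hkey : Q 0 < 1/α - α^2/4 := by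
    simp only [hQ]
    rw [show (0:ℕ)+1 = 1 from rfl, e0, e1]
    exact pad_key_ineq α C hα h1 h2 hα0 hD hC
  intro n _
  have hpow : (0:ℝ) < α ^ n := pow_pos hα0 n
  have hEn2 : E n ^ 2 < (α ^ n)⁻¹ := by
    have hq := hEQ n
    rw [hQn n] at hq
    have h4 : E n ^ 2 * (1/α - α^2/4) < (α ^ n)⁻¹ * (1/α - α^2/4) := by
      calc E n ^ 2 * (1/α - α^2/4) ≤ Q 0 / α ^ n := hq
        _ < (1/α - α^2/4) / α ^ n := div_lt_div_of_pos_right hkey hpow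
        _ = (α ^ n)⁻¹ * (1/α - α^2/4) := by rw [div_eq_inv_mul]
    exact lt_of_mul_lt_mul_right h4 hmu.le
  have ht : (0:ℝ) < α ^ (-(n : ℝ) / 2) := Real.rpow_pos_of_pos hα0 _
  have ht2 : (α ^ (-(n : ℝ) / 2)) ^ 2 = (α ^ n)⁻¹ := by
    rw [← Real.rpow_natCast (α ^ (-(n : ℝ) / 2)) 2, ← Real.rpow_mul hα0.le]
    norm_num
  have hfin : |E n| < α ^ (-(n : ℝ) / 2) := by
    by_contra h
    push_neg at h
    nlinarith [mul_le_mul h h ht.le (abs_nonneg (E n)), sq_abs (E n)]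
  simpa [hE, padErr] using hfin
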